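/- Let λ = (λ_1 ≥ … ≥ λ_s > 0) be a partition with s parts and let n be a natural number. In the polynomial ring ℤ[x_1,…,x_n], the product of elementary symmetric polynomials e_{λ_1}·e_{λ_2}···e_{λ_s} equals Σ_μ a_{λμ}·m_μ, where the sum runs over all partitions μ of |λ| with at most n parts, m_μ is the monomial symmetric polynomial of μ (the sum of all distinct monomials x_1^{α_1}···x_n^{α_n} with (α_1,…,α_n) a permutation of (μ_1,…,μ_n)), and a_{λμ} is the number of finitely supported functions A : ℕ⁺ × {1,…,s} → {0,1} whose t-th column sum is λ_t for each t ∈ {1,…,s} and whose i-th row sum is μ_i for each i. -/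

import Mathlib

/-- A partition: a weakly decreasing sequence of natural numbers with
finitely many nonzero terms.  The part `λ_{t}` (1-indexed) is `f (t-1)`. -/
structure NatPartition where
  f : ℕ → ℕ
  antitone : ∀ ⦃i j : ℕ⦄, i ≤ j → f j ≤ f i
  finite_support : (Function.support f).Finite

/-- The size `|λ|` of a partition: the sum of its parts. -/
noncomputable def NatPartition.size (l : NatPartition) : ℕ := ∑ᶠ i, l.f i

/-- The monomial symmetric polynomial in `ℤ[x_1,…,x_n]` attached to an exponent
vector `μ : Fin n → ℕ`: the sum of all distinct monomials `x^α` where `α` is a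
permutation of `μ`. -/
noncomputable def monomialSym (n : ℕ) (μ : Fin n → ℕ) : MvPolynomial (Fin n) ℤ :=
  ∑ α ∈ Finset.univ.image (fun σ : Equiv.Perm (Fin n) => μ ∘ σ),
    MvPolynomial.monomial (Finsupp.equivFunOnFinite.symm α) (1 : ℤ)

/-- `a_{λμ}`: the number of finitely supported `{0,1}`-matrices
`A : ℕ⁺ × {1,…,s} → {0,1}` with column sums `λ` and row sums `μ`. -/
noncomputable def aCoeff (s : ℕ) (lam μ : NatPartition) : ℕ :=
  Nat.card {A : ℕ → Fin s → ℕ //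
    (∀ i t, A i t ≤ 1) ∧
    (Function.support fun pr : ℕ × Fin s => A pr.1 pr.2).Finite ∧
    (∀ t : Fin s, ∑ᶠ i, A i t = lam.f t) ∧
    (∀ i, ∑ t : Fin s, A i t = μ.f i)}

namespace EsymmAux

open Finset MvPolynomial

variable (n s : ℕ)

/-- row sum of the 0/1 matrix described by a family of column subsets. -/
def rowSum (F : Fin s → Finset (Fin n)) (i : Fin n) : ℕ :=
  #(Finset.univ.filter fun t : Fin s => i ∈ F t)

/-- the set of all families of column subsets with prescribed column sums. -/
def P (lam : NatPartition) : Finset (Fin s → Finset (Fin n)) :=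
  Fintype.piFinset fun t => Finset.powersetCard (lam.f t) Finset.univ

lemma lhs_expand (lam : NatPartition) :
    ∏ t : Fin s, esymm (Fin n) ℤ (lam.f t)
      = ∑ F ∈ P n s lam,
          monomial (Finsupp.equivFunOnFinite.symm (rowSum n s F)) (1 : ℤ) := by
  simp_rw [esymm_eq_sum_monomial]
  rw [Finset.prod_univ_sum]
  refine Finset.sum_congr rfl fun F hF => ?_
  rw [← monomial_sum_one]
  have : (∑ t : Fin s, ∑ i ∈ F t, Finsupp.single i 1)
      = Finsupp.equivFunOnFinite.symm (rowSum n s F) := by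
    ext j
    classical
    rw [Finset.sum_apply']
    simp only [Finsupp.coe_equivFunOnFinite_symm, rowSum]
    rw [Finset.card_filter]
    refine Finset.sum_congr rfl fun t _ => ?_
    rw [Finset.sum_apply']
    simp [Finsupp.single_apply]
  rw [this]

lemma sum_rowSum (lam : NatPartition) (F : Fin s → Finset (Fin n)) (hF : F ∈ P n s lam) :
    ∑ i, rowSum n s F i = ∑ t : Fin s, lam.f t := by
  simp only [P, Fintype.mem_piFinset, Finset.mem_powersetCard_univ] at hF
  simp only [rowSum, Finset.card_filter]
  rw [Finset.sum_comm]
  refine Finset.sum_congr rfl fun t _ => ?_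
  rw [← hF t, ← Finset.card_filter]
  congr 1
  simp [Finset.filter_mem_eq_inter]


/-- extensionality for partitions supported below `n`. -/
lemma part_ext {μ₁ μ₂ : NatPartition} (h1 : ∀ i, n ≤ i → μ₁.f i = 0)
    (h2 : ∀ i, n ≤ i → μ₂.f i = 0)
    (h : ∀ i : Fin n, μ₁.f i = μ₂.f i) : μ₁ = μ₂ := by
  obtain ⟨f1, a1, s1⟩ := μ₁
  obtain ⟨f2, a2, s2⟩ := μ₂
  simp only at h1 h2 h
  congr 1
  funext i
  by_cases hi : i < n
  · exact h ⟨i, hi⟩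
  · rw [h1 i (le_of_not_gt hi), h2 i (le_of_not_gt hi)]

/-- two antitone tuples that are permutations of each other are equal -/
lemma antitone_unique {g1 g2 : Fin n → ℕ} (ha1 : Antitone g1) (ha2 : Antitone g2)
    (σ : Equiv.Perm (Fin n)) (h : g1 = g2 ∘ σ) : g1 = g2 := by
  have key := Tuple.unique_monotone (f := fun i => OrderDual.toDual (g2 i)) (σ := σ)
    (τ := 1) (by
      intro i j hij
      have : g1 j ≤ g1 i := ha1 hij
      rw [h] at this
      exact this) (by
      intro i j hij
      exact ha2 hij)
  rw [h]
  funext i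
  exact congrFun key i

/-- sorting an exponent vector into a partition. -/
noncomputable def sortPerm (α : Fin n → ℕ) : Equiv.Perm (Fin n) :=
  (Fin.revPerm).trans (Tuple.sort α)

lemma antitone_comp_sortPerm (α : Fin n → ℕ) : Antitone (α ∘ sortPerm n α) := by
  intro i j hij
  have := Tuple.monotone_sort α (Fin.rev_le_rev.2 hij)
  simpa [sortPerm] using this

noncomputable def sortPart (α : Fin n → ℕ) : NatPartition where
  f i := if h : i < n then α (sortPerm n α ⟨i, h⟩) else 0
  antitone := by
    intro i j hij
    by_cases hj : j < n
    · have hi : i < n := lt_of_le_of_lt hij hj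
      rw [dif_pos hi, dif_pos hj]
      exact antitone_comp_sortPerm n α (show (⟨i, hi⟩ : Fin n) ≤ ⟨j, hj⟩ from hij)
    · rw [dif_neg hj]
      exact Nat.zero_le _
  finite_support := by
    apply Set.Finite.subset (Set.finite_Iio n)
    intro i hi
    simp only [Function.mem_support] at hi
    by_contra hin
    exact hi (dif_neg (by simpa [Set.mem_Iio] using hin))

lemma sortPart_apply_fin (α : Fin n → ℕ) (i : Fin n) :
    (sortPart n α).f i = α (sortPerm n α i) := by
  simp [sortPart]

lemma sortPart_zero (α : Fin n → ℕ) (i : ℕ) (hi : n ≤ i) : (sortPart n α).f i = 0 :=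
  dif_neg (not_lt.2 hi)

lemma sortPart_size (α : Fin n → ℕ) : (sortPart n α).size = ∑ i, α i := by
  unfold NatPartition.size
  rw [finsum_eq_sum_of_support_subset _ (s := Finset.range n) (by
    intro i hi
    simp only [Function.mem_support] at hi
    by_contra hin
    exact hi (sortPart_zero n α i (by simpa using hin)))]
  rw [← Fin.sum_univ_eq_sum_range]
  rw [Finset.sum_congr rfl fun i _ => sortPart_apply_fin n α i]
  exact Equiv.sum_comp (sortPerm n α) α


lemma aCoeff_eq_card (lam μ : NatPartition) (hμ : ∀ i, n ≤ i → μ.f i = 0) :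
    aCoeff s lam μ
      = #((P n s lam).filter fun F => rowSum n s F = fun i : Fin n => μ.f i) := by
  classical
  rw [aCoeff, ← Nat.card_eq_finsetCard]
  refine Nat.card_congr (Equiv.ofBijective
    (fun A => ⟨fun t => Finset.univ.filter (fun i : Fin n => A.1 i t = 1), ?_⟩) ⟨?_, ?_⟩)
  · -- membership in the filtered set
    obtain ⟨A, hle, hfin, hcol, hrow⟩ := A
    have hzero : ∀ i, n ≤ i → ∀ t, A i t = 0 := by
      intro i hi t
      have h0 : ∑ t : Fin s, A i t = 0 := by rw [hrow i, hμ i hi]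
      exact (Finset.sum_eq_zero_iff.1 h0) t (Finset.mem_univ t)
    have hval : ∀ (i : Fin n) t, A i t = if A (i : ℕ) t = 1 then 1 else 0 := by
      intro i t
      have := hle i t
      interval_cases h : A (i : ℕ) t <;> simp
    simp only [Finset.mem_filter, P, Fintype.mem_piFinset, Finset.mem_powersetCard_univ]
    constructor
    · intro t
      have hsupp : (Function.support fun i => A i t) ⊆ ↑(Finset.range n) := by
        intro i hi
        simp only [Function.mem_support] at hi
        simp only [Finset.coe_range, Set.mem_Iio]
        by_contra hin
        exact hi (hzero i (le_of_not_gt hin) t)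
      have : ∑ᶠ i, A i t = ∑ i ∈ Finset.range n, A i t :=
        finsum_eq_sum_of_support_subset _ hsupp
      rw [hcol t] at this
      rw [Finset.card_filter]
      rw [← Fin.sum_univ_eq_sum_range (fun i => A i t)] at this
      rw [this]
      exact Finset.sum_congr rfl fun i _ => (hval i t).symm
    · funext i
      rw [rowSum, Finset.card_filter]
      simp only [Finset.mem_filter, Finset.mem_univ, true_and]
      rw [← hrow (i : ℕ)]
      exact Finset.sum_congr rfl fun t _ => (hval i t).symm
  · -- injectivity
    rintro ⟨A, hA⟩ ⟨B, hB⟩ hAB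
    simp only [Subtype.mk.injEq] at hAB ⊢
    have hzA : ∀ i, n ≤ i → ∀ t, A i t = 0 := by
      intro i hi t
      have h0 : ∑ t : Fin s, A i t = 0 := by rw [hA.2.2.2 i, hμ i hi]
      exact (Finset.sum_eq_zero_iff.1 h0) t (Finset.mem_univ t)
    have hzB : ∀ i, n ≤ i → ∀ t, B i t = 0 := by
      intro i hi t
      have h0 : ∑ t : Fin s, B i t = 0 := by rw [hB.2.2.2 i, hμ i hi]
      exact (Finset.sum_eq_zero_iff.1 h0) t (Finset.mem_univ t)
    funext i t
    by_cases hi : i < n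
    · have := congrFun hAB t
      have h2 := congrArg (fun S => (⟨i, hi⟩ : Fin n) ∈ S) this
      simp only [Finset.mem_filter, Finset.mem_univ, true_and, eq_iff_iff] at h2
      have hA1 := hA.1 i t
      have hB1 := hB.1 i t
      interval_cases hxa : A i t <;> interval_cases hxb : B i t <;> simp_all
    · rw [hzA i (le_of_not_gt hi) t, hzB i (le_of_not_gt hi) t]
  · -- surjectivity
    rintro ⟨F, hF⟩
    simp only [Finset.mem_filter, P, Fintype.mem_piFinset, Finset.mem_powersetCard_univ] at hF
    obtain ⟨hcard, hrow⟩ := hF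
    refine ⟨⟨fun i t => if h : i < n then (if (⟨i, h⟩ : Fin n) ∈ F t then 1 else 0) else 0,
      ?_, ?_, ?_, ?_⟩, ?_⟩
    · intro i t
      dsimp only
      split_ifs <;> simp
    · apply Set.Finite.subset ((Finset.range n ×ˢ (Finset.univ : Finset (Fin s))).finite_toSet)
      rintro ⟨i, t⟩ hit
      simp only [Function.mem_support] at hit
      simp only [Finset.coe_product, Set.mem_prod, Finset.coe_range, Set.mem_Iio,
        Finset.coe_univ, Set.mem_univ, and_true]
      by_contra hin
      exact hit (dif_neg hin)
    · intro t
      rw [finsum_eq_sum_of_support_subset _ (s := Finset.range n) (by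
        intro i hi
        simp only [Function.mem_support] at hi
        simp only [Finset.coe_range, Set.mem_Iio]
        by_contra hin
        exact hi (dif_neg hin))]
      rw [← Fin.sum_univ_eq_sum_range]
      have hc : (∑ i : Fin n, if i ∈ F t then 1 else 0) = #(F t) := by
        rw [← Finset.card_filter]
        congr 1
        simp [Finset.filter_mem_eq_inter]
      rw [← hcard t, ← hc]
      exact Finset.sum_congr rfl fun i _ => by simp [Fin.eta]
    · intro i
      by_cases hi : i < n
      · have : μ.f i = rowSum n s F ⟨i, hi⟩ := by rw [hrow]
        rw [this, rowSum, Finset.card_filter]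
        refine Finset.sum_congr rfl fun t _ => ?_
        dsimp only
        rw [dif_pos hi]
      · rw [hμ i (le_of_not_gt hi)]
        exact Finset.sum_eq_zero fun t _ => dif_neg hi
    · simp only [Subtype.mk.injEq]
      funext t
      ext i
      simp [Fin.eta]


lemma rowSum_map (F : Fin s → Finset (Fin n)) (σ : Equiv.Perm (Fin n)) (i : Fin n) :
    rowSum n s (fun t => (F t).map σ.symm.toEmbedding) i = rowSum n s F (σ i) := by
  unfold rowSum
  congr 1
  ext t
  simp [Finset.mem_map_equiv]

lemma card_filter_rowSum_comp (lam : NatPartition) (β : Fin n → ℕ) (σ : Equiv.Perm (Fin n)) :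
    #((P n s lam).filter fun F => rowSum n s F = β)
      = #((P n s lam).filter fun F => rowSum n s F = β ∘ σ) := by
  classical
  refine Finset.card_bij' (fun F _ => fun t => (F t).map σ.symm.toEmbedding)
    (fun F _ => fun t => (F t).map σ.toEmbedding) ?_ ?_ ?_ ?_
  · rintro F hF
    simp only [Finset.mem_filter, P, Fintype.mem_piFinset,
      Finset.mem_powersetCard_univ] at hF ⊢
    obtain ⟨h1, h2⟩ := hF
    refine ⟨fun t => by rw [Finset.card_map]; exact h1 t, ?_⟩
    funext i
    rw [rowSum_map, h2]
    rfl
  · rintro F hF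
    simp only [Finset.mem_filter, P, Fintype.mem_piFinset,
      Finset.mem_powersetCard_univ] at hF ⊢
    obtain ⟨h1, h2⟩ := hF
    refine ⟨fun t => by rw [Finset.card_map]; exact h1 t, ?_⟩
    funext i
    have : (fun t => (F t).map σ.toEmbedding)
        = fun t => (F t).map (σ.symm.symm.toEmbedding) := by simp
    rw [this, rowSum_map (σ := σ.symm), h2]
    simp
  · intro F _
    funext t
    ext i
    simp [Finset.mem_map_equiv]
  · intro F _
    funext t
    ext i
    simp [Finset.mem_map_equiv]

end EsymmAux

open EsymmAux Finset

/-- For a partition `λ` with `s` parts, the product of elementary symmetric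
polynomials `e_{λ_1}⋯e_{λ_s}` in `ℤ[x_1,…,x_n]` equals `Σ_μ a_{λμ}·m_μ`, summed
over all partitions `μ` of `|λ|` with at most `n` parts. -/
theorem esymm_prod_eq_sum_monomialSym (n s : ℕ) (lam : NatPartition)
    (hs : ∀ i, 0 < lam.f i ↔ i < s) :
    ∏ t : Fin s, MvPolynomial.esymm (Fin n) ℤ (lam.f t)
      = ∑ᶠ μ ∈ {μ : NatPartition | μ.size = lam.size ∧ ∀ i, n ≤ i → μ.f i = 0},
          (aCoeff s lam μ : MvPolynomial (Fin n) ℤ) *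
            monomialSym n (fun i => μ.f i) := by
  classical
  have hlamsum : lam.size = ∑ t : Fin s, lam.f t := by
    unfold NatPartition.size
    rw [finsum_eq_sum_of_support_subset _ (s := Finset.range s) (by
      intro i hi
      simp only [Function.mem_support] at hi
      simp only [Finset.coe_range, Set.mem_Iio]
      exact (hs i).1 (Nat.pos_of_ne_zero hi))]
    exact (Fin.sum_univ_eq_sum_range lam.f s).symm
  have hSfin : ({μ : NatPartition | μ.size = lam.size ∧ ∀ i, n ≤ i → μ.f i = 0}).Finite := by
    apply Set.Finite.of_finite_image (f := fun μ : NatPartition => fun i : Fin n => μ.f i)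
    · apply Set.Finite.subset (Set.Finite.pi fun _ : Fin n => Set.finite_Iic lam.size)
      rintro g ⟨μ, hμ, rfl⟩
      intro i _
      simp only [Set.mem_Iic]
      calc μ.f i ≤ μ.size := single_le_finsum _ μ.finite_support fun j => Nat.zero_le _
        _ = lam.size := hμ.1
    · rintro μ₁ hμ₁ μ₂ hμ₂ h
      exact part_ext n hμ₁.2 hμ₂.2 fun i => congrFun h i
  rw [finsum_mem_eq_finite_toFinset_sum _ hSfin]
  rw [lhs_expand n s lam]
  rw [Finset.sum_comp
    (fun α : Fin n → ℕ => MvPolynomial.monomial (Finsupp.equivFunOnFinite.symm α) (1 : ℤ))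
    (rowSum n s)]
  -- key: the coefficient is constant along an orbit
  have key : ∀ μ ∈ hSfin.toFinset, ∀ σ : Equiv.Perm (Fin n),
      aCoeff s lam μ
        = #((P n s lam).filter fun F => rowSum n s F = (fun i : Fin n => μ.f i) ∘ σ) := by
    intro μ hμmem σ
    rw [Set.Finite.mem_toFinset] at hμmem
    rw [aCoeff_eq_card n s lam μ hμmem.2]
    exact card_filter_rowSum_comp n s lam (fun i : Fin n => μ.f i) σ
  have step1 : (∑ μ ∈ hSfin.toFinset,
        (aCoeff s lam μ : MvPolynomial (Fin n) ℤ) * monomialSym n (fun i => μ.f i))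
      = ∑ μ ∈ hSfin.toFinset,
          ∑ α ∈ Finset.univ.image (fun σ : Equiv.Perm (Fin n) => (fun i : Fin n => μ.f i) ∘ σ),
            #((P n s lam).filter fun F => rowSum n s F = α)
              • MvPolynomial.monomial (Finsupp.equivFunOnFinite.symm α) (1 : ℤ) := by
    refine Finset.sum_congr rfl fun μ hμmem => ?_
    rw [monomialSym, Finset.mul_sum]
    refine Finset.sum_congr rfl fun α hα => ?_
    obtain ⟨σ, -, rfl⟩ := Finset.mem_image.1 hα
    rw [← key μ hμmem σ, nsmul_eq_mul]
  have hdisj : (↑hSfin.toFinset : Set NatPartition).PairwiseDisjoint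
      (fun μ : NatPartition =>
        Finset.univ.image (fun σ : Equiv.Perm (Fin n) => (fun i : Fin n => μ.f i) ∘ σ)) := by
    intro μ₁ hμ₁ μ₂ hμ₂ hne
    rw [Finset.mem_coe, Set.Finite.mem_toFinset] at hμ₁ hμ₂
    intro u hu1 hu2
    simp only [Finset.le_iff_subset, Finset.subset_iff] at hu1 hu2 ⊢
    intro α hα
    exfalso
    obtain ⟨σ₁, -, h1⟩ := Finset.mem_image.1 (hu1 hα)
    obtain ⟨σ₂, -, h2⟩ := Finset.mem_image.1 (hu2 hα)
    apply hne
    have ha1 : Antitone (fun i : Fin n => μ₁.f i) := fun i j hij => μ₁.antitone hij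
    have ha2 : Antitone (fun i : Fin n => μ₂.f i) := fun i j hij => μ₂.antitone hij
    have hcomp : (fun i : Fin n => μ₁.f i)
        = (fun i : Fin n => μ₂.f i) ∘ (σ₁⁻¹.trans σ₂) := by
      funext i
      have e1 := congrFun h1 (σ₁⁻¹ i)
      have e2 := congrFun h2 (σ₁⁻¹ i)
      simp only [Function.comp_apply] at e1 e2 ⊢
      simp only [Equiv.trans_apply]
      rw [e2, ← e1]
      simp
    have := antitone_unique n ha1 ha2 (σ₁⁻¹.trans σ₂) hcomp
    exact part_ext n hμ₁.2 hμ₂.2 fun i => congrFun this i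
  have step2 : (∑ μ ∈ hSfin.toFinset,
          ∑ α ∈ Finset.univ.image (fun σ : Equiv.Perm (Fin n) => (fun i : Fin n => μ.f i) ∘ σ),
            #((P n s lam).filter fun F => rowSum n s F = α)
              • MvPolynomial.monomial (Finsupp.equivFunOnFinite.symm α) (1 : ℤ))
      = ∑ α ∈ hSfin.toFinset.biUnion
            (fun μ => Finset.univ.image
              (fun σ : Equiv.Perm (Fin n) => (fun i : Fin n => μ.f i) ∘ σ)),
            #((P n s lam).filter fun F => rowSum n s F = α)
              • MvPolynomial.monomial (Finsupp.equivFunOnFinite.symm α) (1 : ℤ) :=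
    (Finset.sum_biUnion hdisj).symm
  have step3 : (∑ α ∈ hSfin.toFinset.biUnion
            (fun μ => Finset.univ.image
              (fun σ : Equiv.Perm (Fin n) => (fun i : Fin n => μ.f i) ∘ σ)),
            #((P n s lam).filter fun F => rowSum n s F = α)
              • MvPolynomial.monomial (Finsupp.equivFunOnFinite.symm α) (1 : ℤ))
      = ∑ α ∈ (P n s lam).image (rowSum n s),
            #((P n s lam).filter fun F => rowSum n s F = α)
              • MvPolynomial.monomial (Finsupp.equivFunOnFinite.symm α) (1 : ℤ) := by
    refine (Finset.sum_subset ?_ ?_).symm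
    · intro α hα
      obtain ⟨F, hF, rfl⟩ := Finset.mem_image.1 hα
      rw [Finset.mem_biUnion]
      refine ⟨sortPart n (rowSum n s F), ?_, ?_⟩
      · rw [Set.Finite.mem_toFinset]
        refine ⟨?_, sortPart_zero n _⟩
        rw [sortPart_size, sum_rowSum n s lam F hF, hlamsum]
      · rw [Finset.mem_image]
        refine ⟨(sortPerm n (rowSum n s F))⁻¹, Finset.mem_univ _, ?_⟩
        funext i
        simp only [Function.comp_apply]
        rw [sortPart_apply_fin]
        simp
    · intro α hα hnotin
      have : ((P n s lam).filter fun F => rowSum n s F = α) = ∅ := by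
        rw [Finset.filter_eq_empty_iff]
        intro F hF hr
        exact hnotin (Finset.mem_image.2 ⟨F, hF, hr⟩)
      rw [this]
      simp
  rw [step1, step2, step3]
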